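/- Let p and q be coprime positive integers and let S = {n : 0 < n < pq and n = qx + py for some integers x, y with 0 < x < p and 0 < y < q}. Then the sum of the elements of S equals pq(p-1)(q-1)/3 + (p-1)(q-1)(p+q+1)/12. -/

import Mathlib

open Finset

lemma mord_sum_range_cast (n : ℕ) : ∑ i ∈ range n, (i:ℚ) = n*(n-1)/2 := by
  induction n with
  | zero => simp
  | succ k ih => rw [sum_range_succ, ih]; push_cast; ring

lemma mord_sum_range_sq (n : ℕ) : ∑ i ∈ range n, (i:ℚ)^2 = n*(n-1)*(2*n-1)/6 := by
  induction n with
  | zero => simp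
  | succ k ih => rw [sum_range_succ, ih]; push_cast; ring

lemma mord_Ioo_erase (n : ℕ) : Finset.Ioo 0 n = (range n).erase 0 := by
  ext i; simp [Finset.mem_Ioo]; omega

lemma mord_sum_Ioo_cast (n : ℕ) : ∑ i ∈ Finset.Ioo 0 n, (i:ℚ) = n*(n-1)/2 := by
  rw [mord_Ioo_erase, Finset.sum_erase _ (by simp), mord_sum_range_cast]

lemma mord_sum_Ioo_sq (n : ℕ) : ∑ i ∈ Finset.Ioo 0 n, (i:ℚ)^2 = n*(n-1)*(2*n-1)/6 := by
  rw [mord_Ioo_erase, Finset.sum_erase _ (by simp), mord_sum_range_sq]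

lemma mord_sum_Ioc_cast (n : ℕ) : ∑ i ∈ Finset.Ioc 0 n, (i:ℚ) = n*(n+1)/2 := by
  have : Finset.Ioc 0 n = Finset.Ioo 0 (n+1) := by ext i; simp [Nat.lt_succ_iff]
  rw [this, mord_sum_Ioo_cast]; push_cast; ring

lemma mord_mod_mem {p q : ℕ} (hpq : Nat.Coprime p q) {x : ℕ} (hx : x ∈ Finset.Ioo 0 p) :
    q * x % p ∈ Finset.Ioo 0 p := by
  rw [Finset.mem_Ioo] at hx ⊢
  have hp : 0 < p := lt_trans hx.1 hx.2
  refine ⟨?_, Nat.mod_lt _ hp⟩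
  rcases Nat.eq_zero_or_pos (q * x % p) with h | h
  · exfalso
    have hdvd : p ∣ q * x := Nat.dvd_of_mod_eq_zero h
    have : p ∣ x := hpq.dvd_of_dvd_mul_left hdvd
    have := Nat.le_of_dvd hx.1 this
    omega
  · exact h

lemma mord_perm (p q : ℕ) (hpq : Nat.Coprime p q) (h : ℕ → ℚ) :
    ∑ x ∈ Finset.Ioo 0 p, h (q * x % p) = ∑ t ∈ Finset.Ioo 0 p, h t := by
  have inj : ∀ (a₁ : ℕ), a₁ ∈ Finset.Ioo 0 p → ∀ (a₂ : ℕ), a₂ ∈ Finset.Ioo 0 p →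
      q * a₁ % p = q * a₂ % p → a₁ = a₂ := by
    intro a₁ h₁ a₂ h₂ he
    rw [Finset.mem_Ioo] at h₁ h₂
    have : a₁ ≡ a₂ [MOD p] :=
      Nat.ModEq.cancel_left_of_coprime hpq he
    have := this.eq_of_lt_of_lt h₁.2 h₂.2
    exact this
  refine Finset.sum_bij (fun a _ => q * a % p) (fun a ha => mord_mod_mem hpq ha)
    inj ?_ (fun a ha => rfl)
  intro b hb
  obtain ⟨a, ha, hab⟩ := Finset.surj_on_of_inj_on_of_card_le (fun a _ => q * a % p)
    (fun a ha => mord_mod_mem hpq ha) (fun a₁ a₂ h₁ h₂ => inj a₁ h₁ a₂ h₂) le_rfl b hb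
  exact ⟨a, ha, hab.symm⟩

open Classical in
theorem mordell_sum (p q : ℕ) (hp : 0 < p) (hq : 0 < q) (hpq : Nat.Coprime p q) :
    (∑ n ∈ (Finset.Ioo 0 (p * q)).filter
        (fun n => ∃ x y : ℕ, 0 < x ∧ x < p ∧ 0 < y ∧ y < q ∧ n = q * x + p * y),
      (n : ℚ)) =
    (p : ℚ) * q * ((p : ℚ) - 1) * ((q : ℚ) - 1) / 3 +
      ((p : ℚ) - 1) * ((q : ℚ) - 1) * ((p : ℚ) + q + 1) / 12 := by
  classical
  have hp0 : (p:ℚ) ≠ 0 := by positivity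
  -- Step 1: rewrite the set as an image of a filtered product
  have himg : (Finset.Ioo 0 (p * q)).filter
        (fun n => ∃ x y : ℕ, 0 < x ∧ x < p ∧ 0 < y ∧ y < q ∧ n = q * x + p * y)
      = ((Finset.Ioo 0 p ×ˢ Finset.Ioo 0 q).filter
          (fun z => q * z.1 + p * z.2 < p * q)).image (fun z => q * z.1 + p * z.2) := by
    ext n
    simp only [Finset.mem_filter, Finset.mem_Ioo, Finset.mem_image, Finset.mem_product]
    constructor
    · rintro ⟨⟨hn0, hnpq⟩, x, y, hx0, hxp, hy0, hyq, rfl⟩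
      exact ⟨(x, y), ⟨⟨⟨hx0, hxp⟩, ⟨hy0, hyq⟩⟩, hnpq⟩, rfl⟩
    · rintro ⟨⟨x, y⟩, ⟨⟨⟨hx0, hxp⟩, ⟨hy0, hyq⟩⟩, hlt⟩, rfl⟩
      refine ⟨⟨?_, hlt⟩, x, y, hx0, hxp, hy0, hyq, rfl⟩
      show 0 < q * x + p * y
      have : 0 < q * x := Nat.mul_pos hq hx0
      omega
  have hinj : ∀ z₁ ∈ (Finset.Ioo 0 p ×ˢ Finset.Ioo 0 q).filter
        (fun z => q * z.1 + p * z.2 < p * q),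
      ∀ z₂ ∈ (Finset.Ioo 0 p ×ˢ Finset.Ioo 0 q).filter
        (fun z => q * z.1 + p * z.2 < p * q),
      q * z₁.1 + p * z₁.2 = q * z₂.1 + p * z₂.2 → z₁ = z₂ := by
    rintro ⟨x₁, y₁⟩ h₁ ⟨x₂, y₂⟩ h₂ he
    simp only [Finset.mem_filter, Finset.mem_product, Finset.mem_Ioo] at h₁ h₂
    dsimp only at he
    have hm₁ : (q * x₁) % p = (q * x₁ + p * y₁) % p := (Nat.add_mul_mod_self_left _ _ _).symm
    have hm₂ : (q * x₂) % p = (q * x₂ + p * y₂) % p := (Nat.add_mul_mod_self_left _ _ _).symm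
    have hmod : q * x₁ ≡ q * x₂ [MOD p] := by
      unfold Nat.ModEq
      rw [hm₁, hm₂, he]
    have hx : x₁ ≡ x₂ [MOD p] := Nat.ModEq.cancel_left_of_coprime hpq hmod
    have hxeq : x₁ = x₂ := hx.eq_of_lt_of_lt h₁.1.1.2 h₂.1.1.2
    subst hxeq
    have : p * y₁ = p * y₂ := by omega
    have : y₁ = y₂ := by
      have hpy := Nat.eq_of_mul_eq_mul_left hp this
      exact hpy
    simp [this]
  -- Step 2: inner sum closed form
  have key : ∀ x ∈ Finset.Ioo 0 p,
      (∑ y ∈ Finset.Ioo 0 q, if q * x + p * y < p * q then ((q * x + p * y : ℕ) : ℚ) else 0)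
      = (p:ℚ) * q * (q - 1) / 2 + (2 * (q:ℚ) - 1) / 2 * ((q * x % p : ℕ) : ℚ)
        + 1 / (2 * (p:ℚ)) * ((q * x % p : ℕ) : ℚ) ^ 2 + (-(q:ℚ) / 2) * (x:ℚ)
        + (-(q:ℚ) ^ 2 / (2 * (p:ℚ))) * (x:ℚ) ^ 2 := by
    intro x hx
    have hxm := Finset.mem_Ioo.mp hx
    set F := q * x / p with hF
    set R := q * x % p with hR
    have hdm : p * F + R = q * x := Nat.div_add_mod (q * x) p
    have hR0 : 0 < R := (Finset.mem_Ioo.mp (mord_mod_mem hpq hx)).1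
    have hRp : R < p := Nat.mod_lt _ hp
    have hFq : F < q := by
      rw [hF]
      apply Nat.div_lt_of_lt_mul
      calc q * x ≤ q * (p - 1) := Nat.mul_le_mul_left q (by omega)
        _ < q * p := by
            have h1 : q * (p - 1) + q = q * p := by
              rw [← Nat.mul_succ]; congr 1; omega
            omega
        _ = p * q := Nat.mul_comm q p
    clear_value F R
    clear hF hR
    have hiff : ∀ y : ℕ, 0 < y → (q * x + p * y < p * q ↔ y ≤ q - 1 - F) := by
      intro y hy
      constructor
      · intro hlt
        by_contra hc
        push_neg at hc
        have h2 : q ≤ F + y := by omega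
        have h3 : p * q ≤ p * (F + y) := Nat.mul_le_mul_left p h2
        rw [Nat.mul_add] at h3
        omega
      · intro hle
        have h2 : F + y + 1 ≤ q := by omega
        have h3 : p * (F + y + 1) ≤ p * q := Nat.mul_le_mul_left p h2
        rw [Nat.mul_add, Nat.mul_add, Nat.mul_one] at h3
        omega
    have hset : Finset.filter (fun y => q * x + p * y < p * q) (Finset.Ioo 0 q)
        = Finset.Ioc 0 (q - 1 - F) := by
      ext y
      simp only [Finset.mem_filter, Finset.mem_Ioo, Finset.mem_Ioc]
      constructor
      · rintro ⟨⟨hy0, hyq⟩, hlt⟩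
        exact ⟨hy0, (hiff y hy0).mp hlt⟩
      · rintro ⟨hy0, hle⟩
        exact ⟨⟨hy0, by omega⟩, (hiff y hy0).mpr hle⟩
    rw [← Finset.sum_filter, hset]
    set m := q - 1 - F with hm
    have hmq : m + F + 1 = q := by omega
    have hcard : (Finset.Ioc 0 m).card = m := by simp
    push_cast
    rw [Finset.sum_add_distrib, Finset.sum_const, hcard, ← Finset.mul_sum, mord_sum_Ioc_cast,
      nsmul_eq_mul]
    have hmc : (m:ℚ) + F + 1 = q := by exact_mod_cast hmq
    have hdc : (p:ℚ) * F + R = q * x := by exact_mod_cast hdm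
    have hFc : (F:ℚ) = ((q:ℚ) * x - R) / p := by field_simp; linarith
    have hmc2 : (m:ℚ) = (q:ℚ) - F - 1 := by linarith
    rw [hmc2, hFc]
    field_simp
    ring
  rw [himg, Finset.sum_image hinj, Finset.sum_filter, Finset.sum_product,
    Finset.sum_congr rfl key]
  -- Step 3: assemble
  have e1 : ∑ x ∈ Finset.Ioo 0 p, ((q * x % p : ℕ) : ℚ) = (p:ℚ) * (p - 1) / 2 :=
    (mord_perm p q hpq (fun t => (t:ℚ))).trans (mord_sum_Ioo_cast p)
  have e2 : ∑ x ∈ Finset.Ioo 0 p, ((q * x % p : ℕ) : ℚ) ^ 2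
      = (p:ℚ) * (p - 1) * (2 * p - 1) / 6 :=
    (mord_perm p q hpq (fun t => (t:ℚ) ^ 2)).trans (mord_sum_Ioo_sq p)
  rw [Finset.sum_add_distrib, Finset.sum_add_distrib, Finset.sum_add_distrib,
    Finset.sum_add_distrib, Finset.sum_const, Nat.card_Ioo, nsmul_eq_mul,
    ← Finset.mul_sum, ← Finset.mul_sum, ← Finset.mul_sum, ← Finset.mul_sum,
    e1, e2, mord_sum_Ioo_cast, mord_sum_Ioo_sq]
  have hpc : ((p - 0 - 1 : ℕ) : ℚ) = (p:ℚ) - 1 := by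
    rw [Nat.sub_zero, Nat.cast_sub hp]
    push_cast; ring
  rw [hpc]
  field_simp
  ring
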